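/- (Lemma 3: either the power constraint or the energy constraint is tight at the optimum.) Consider the power control and time allocation problem PCP with N users: given constants W > 0, Pmax > 0 and, for each i ∈ {1,…,N}, D_i > 0, k_i > 0, B_i ≥ 0, C_i ≥ 0, the feasible set F consists of all pairs of vectors (τ, α) ∈ ℝ^N × ℝ^N with, for every i: τ_i > 0, α_i ≥ 0, W·τ_i·logb 2 (1 + k_i·α_i/τ_i) ≥ D_i, α_i ≤ τ_i·Pmax, and α_i ≤ B_i + C_i·Σ_{j=1}^{i} τ_j. Assume F contains a Slater point (a feasible point at which all inequality constraints of every user hold strictly). If (τ*, α*) ∈ F minimizes Σ_{i=1}^{N} τ_i over F, then for every i ∈ {1,…,N} at least one of the following holds: α*_i = τ*_i·Pmax, or α*_i = B_i + C_i·Σ_{j=1}^{i} τ*_j. -/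

import Mathlib

open Real Filter Finset Topology

private lemma tau_rate_strict_mono {c τ η : ℝ} (hc : 0 < c) (hτ : 0 < τ) (hη : 0 < η) :
    τ * Real.logb 2 (1 + c / τ) < (τ + η) * Real.logb 2 (1 + c / (τ + η)) := by
  have hτη : 0 < τ + η := by linarith
  have hcτ : 0 < c / τ := div_pos hc hτ
  have hx : (1:ℝ) + c / τ ∈ Set.Ioi (0:ℝ) := by simp only [Set.mem_Ioi]; linarith
  have hy : (1:ℝ) ∈ Set.Ioi (0:ℝ) := by norm_num
  have hne : (1:ℝ) + c / τ ≠ 1 := by linarith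
  have ha : 0 < τ / (τ + η) := div_pos hτ hτη
  have hb : 0 < η / (τ + η) := div_pos hη hτη
  have hab : τ / (τ + η) + η / (τ + η) = 1 := by field_simp
  have key := strictConcaveOn_log_Ioi.2 hx hy hne ha hb hab
  simp only [smul_eq_mul, Real.log_one, mul_one, add_zero, mul_zero] at key
  have hcomb : τ / (τ + η) * (1 + c / τ) + η / (τ + η) = 1 + c / (τ + η) := by
    field_simp; ring
  rw [hcomb] at key
  -- key : τ / (τ + η) * Real.log (1 + c / τ) < Real.log (1 + c / (τ + η))
  have key2 : τ * Real.log (1 + c / τ) < (τ + η) * Real.log (1 + c / (τ + η)) := by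
    have := mul_lt_mul_of_pos_left key hτη
    rw [mul_comm (τ / (τ + η)) _, ← mul_assoc] at this
    calc τ * Real.log (1 + c / τ)
        = (τ + η) * Real.log (1 + c / τ) * (τ / (τ + η)) := by field_simp
      _ < (τ + η) * Real.log (1 + c / (τ + η)) := this
  simp only [Real.logb]
  rw [← mul_div_assoc, ← mul_div_assoc, div_lt_div_iff_of_pos_right (Real.log_pos one_lt_two)]
  exact key2

private lemma alpha_rate_strict_mono {Wv τ a ε K : ℝ} (hW : 0 < Wv) (hτ : 0 < τ)
    (ha : 0 ≤ a) (hε : 0 < ε) (hK : 0 < K) :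
    Wv * τ * Real.logb 2 (1 + K * a / τ) < Wv * τ * Real.logb 2 (1 + K * (a + ε) / τ) := by
  have h1 : (0:ℝ) < 1 + K * a / τ := by positivity
  have h2 : 1 + K * a / τ < 1 + K * (a + ε) / τ := by
    have : K * a / τ < K * (a + ε) / τ := by
      rw [div_lt_div_iff_of_pos_right hτ]
      nlinarith
    linarith
  have := Real.logb_lt_logb one_lt_two h1 h2
  exact mul_lt_mul_of_pos_left this (by positivity)

private def Feas (N : ℕ) (Wv Pmax : ℝ) (D k B C : Fin N → ℝ) (τ α : Fin N → ℝ) : Prop :=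
  ∀ l : Fin N, 0 < τ l ∧ 0 ≤ α l ∧
    D l ≤ Wv * τ l * Real.logb 2 (1 + k l * α l / τ l) ∧
    α l ≤ τ l * Pmax ∧
    α l ≤ B l + C l * ∑ x ∈ Finset.Iic l, τ x

private lemma alpha_pos {N : ℕ} {Wv Pmax : ℝ} {D k B C τ α : Fin N → ℝ}
    (hW : 0 < Wv) (hD : ∀ i, 0 < D i)
    (hfeas : Feas N Wv Pmax D k B C τ α) (l : Fin N) : 0 < α l := by
  obtain ⟨h1, h2, h3, -, -⟩ := hfeas l
  rcases h2.lt_or_eq with h | h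
  · exact h
  · exfalso
    rw [← h] at h3
    simp only [mul_zero, zero_div, add_zero, Real.logb_one] at h3
    linarith [hD l]
private lemma lemA (N : ℕ) (Wv Pmax : ℝ) (hW : 0 < Wv) (hPmax : 0 < Pmax)
    (D k B C : Fin N → ℝ) (hD : ∀ i, 0 < D i) (hk : ∀ i, 0 < k i) :
    ∀ n : ℕ, ∀ j : Fin N, N - 1 - (j : ℕ) ≤ n →
      ∀ τ α : Fin N → ℝ, Feas N Wv Pmax D k B C τ α →
      D j < Wv * τ j * Real.logb 2 (1 + k j * α j / τ j) →
      α j < τ j * Pmax →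
      ∃ τ' α' : Fin N → ℝ, Feas N Wv Pmax D k B C τ' α' ∧ ∑ x, τ' x < ∑ x, τ x := by
  intro n
  induction n using Nat.strong_induction_on with
  | _ n IH =>
  intro j hjn τ α hfeas hrate hpow
  classical
  set S : Fin N → ℝ := fun l => ∑ x ∈ Finset.Iic l, τ x with hS
  obtain ⟨hτj, hαj0, hratej, hpowj, henj⟩ := hfeas j
  have hαjpos : 0 < α j := alpha_pos hW hD hfeas j
  -- continuity of the perturbed rate at user j
  have hposdiv : (0:ℝ) ≤ k j * α j / τ j := div_nonneg (mul_nonneg (hk j).le hαj0) hτj.le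
  have hgc : ContinuousAt
      (fun η : ℝ => Wv * (τ j - η) * Real.logb 2 (1 + k j * (α j - C j * η) / (τ j - η))) 0 := by
    simp only [Real.logb]
    have h1 : ContinuousAt (fun η : ℝ => τ j - η) 0 := continuousAt_const.sub continuousAt_id
    have h2 : ContinuousAt (fun η : ℝ => 1 + k j * (α j - C j * η) / (τ j - η)) 0 :=
      continuousAt_const.add ((continuousAt_const.mul
        (continuousAt_const.sub (continuousAt_const.mul continuousAt_id))).div h1
        (by simpa using hτj.ne'))
    have hpos : (fun η : ℝ => 1 + k j * (α j - C j * η) / (τ j - η)) 0 ≠ 0 := by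
      simp only [mul_zero, sub_zero]
      exact ne_of_gt (by linarith)
    exact (continuousAt_const.mul h1).mul ((h2.log hpos).div_const _)
  have E1 : ∀ᶠ η in 𝓝 (0:ℝ), 0 < τ j - η :=
    ContinuousAt.eventually_lt (f := fun _ : ℝ => (0:ℝ)) (g := fun η : ℝ => τ j - η)
      continuousAt_const (continuousAt_const.sub continuousAt_id) (by simpa using hτj)
  have E2 : ∀ᶠ η in 𝓝 (0:ℝ), 0 < α j - C j * η :=
    ContinuousAt.eventually_lt (f := fun _ : ℝ => (0:ℝ)) (g := fun η : ℝ => α j - C j * η)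
      continuousAt_const (continuousAt_const.sub (continuousAt_const.mul continuousAt_id))
      (by simpa using hαjpos)
  have E3 : ∀ᶠ η in 𝓝 (0:ℝ),
      D j < Wv * (τ j - η) * Real.logb 2 (1 + k j * (α j - C j * η) / (τ j - η)) := by
    apply ContinuousAt.eventually_lt continuousAt_const hgc
    simpa using hrate
  have E4 : ∀ᶠ η in 𝓝 (0:ℝ), α j - C j * η < (τ j - η) * Pmax :=
    ContinuousAt.eventually_lt (f := fun η : ℝ => α j - C j * η)
      (g := fun η : ℝ => (τ j - η) * Pmax)
      (continuousAt_const.sub (continuousAt_const.mul continuousAt_id))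
      ((continuousAt_const.sub continuousAt_id).mul continuousAt_const)
      (by simpa using hpow)
  have E5 : ∀ P : Fin N → Prop, (∀ l, P l → C l = 0 ∨ α l < B l + C l * S l) →
      ∀ᶠ η in 𝓝 (0:ℝ), ∀ l, P l → α l ≤ B l + C l * (S l - η) := by
    intro P hP
    rw [Filter.eventually_all]
    intro l
    by_cases hPl : P l
    · rcases hP l hPl with h0 | hlt
      · filter_upwards with η _
        have := (hfeas l).2.2.2.2
        rw [h0] at this ⊢
        simpa using this
      · have : ∀ᶠ η in 𝓝 (0:ℝ), α l < B l + C l * (S l - η) :=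
          ContinuousAt.eventually_lt (f := fun _ : ℝ => α l)
            (g := fun η : ℝ => B l + C l * (S l - η)) continuousAt_const
            (continuousAt_const.add (continuousAt_const.mul
              (continuousAt_const.sub continuousAt_id)))
            (by simpa using hlt)
        filter_upwards [this] with η h _
        exact h.le
    · filter_upwards with η h
      exact absurd h hPl
  by_cases hex : ∃ m : Fin N, j < m ∧ C m ≠ 0 ∧ α m = B m + C m * S m
  · -- Branch 2 : cascade
    set s : Finset (Fin N) :=
      Finset.univ.filter (fun m => j < m ∧ C m ≠ 0 ∧ α m = B m + C m * S m) with hsdef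
    have hsne : s.Nonempty := by
      obtain ⟨m, hm⟩ := hex
      exact ⟨m, by simp [hsdef, hm]⟩
    set m := s.min' hsne with hmdef
    have hmmem : j < m ∧ C m ≠ 0 ∧ α m = B m + C m * S m := by
      have h := s.min'_mem hsne
      exact (Finset.mem_filter.mp h).2
    obtain ⟨hjm, hCm, htight⟩ := hmmem
    have hmin : ∀ l, j < l → l < m → C l = 0 ∨ α l < B l + C l * S l := by
      intro l hjl hlm
      by_cases hCl : C l = 0
      · exact Or.inl hCl
      · right
        have hls : l ∉ s := by
          intro hls
          exact absurd (s.min'_le l hls) (not_le.mpr hlm)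
        have : ¬ (α l = B l + C l * S l) := by
          intro h
          exact hls (by simp [hsdef, hjl, hCl, h])
        exact lt_of_le_of_ne (hfeas l).2.2.2.2 this
    obtain ⟨η, ⟨h1, h2, h3, h4, h5⟩, hηpos⟩ :=
      (((E1.and (E2.and (E3.and (E4.and (E5 (fun l => j < l ∧ l < m)
        (fun l hl => hmin l hl.1 hl.2)))))).filter_mono nhdsWithin_le_nhds).and
        (eventually_mem_nhdsWithin (s := Set.Ioi (0:ℝ)))).exists
    rw [Set.mem_Ioi] at hηpos
    have hjmne : j ≠ m := ne_of_lt hjm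
    set τ' : Fin N → ℝ :=
      fun x => τ x + ((if x = j then -η else 0) + (if x = m then η else 0)) with hτ'
    set α' : Fin N → ℝ := fun x => α x + (if x = j then -(C j * η) else 0) with hα'
    have hτ'j : τ' j = τ j - η := by simp [hτ', hjmne]; ring
    have hτ'm : τ' m = τ m + η := by simp [hτ', hjmne.symm]
    have hτ'other : ∀ l, l ≠ j → l ≠ m → τ' l = τ l := by
      intro l hl1 hl2; simp [hτ', hl1, hl2]
    have hα'j : α' j = α j - C j * η := by simp [hα']; ring
    have hα'other : ∀ l, l ≠ j → α' l = α l := by intro l hl; simp [hα', hl]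
    have hsum : ∀ l : Fin N, ∑ x ∈ Finset.Iic l, τ' x
        = S l + ((if j ≤ l then -η else 0) + (if m ≤ l then η else 0)) := by
      intro l
      simp only [hτ']
      rw [Finset.sum_add_distrib, Finset.sum_add_distrib,
        Finset.sum_ite_eq' (Finset.Iic l) j (fun _ => -η),
        Finset.sum_ite_eq' (Finset.Iic l) m (fun _ => η)]
      simp [Finset.mem_Iic, hS]
    have hsumtot : ∑ x, τ' x = ∑ x, τ x := by
      simp only [hτ']
      rw [Finset.sum_add_distrib, Finset.sum_add_distrib,
        Finset.sum_ite_eq' Finset.univ j (fun _ => -η),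
        Finset.sum_ite_eq' Finset.univ m (fun _ => η)]
      simp
    have hfeas' : Feas N Wv Pmax D k B C τ' α' := by
      intro l
      have hSl' := hsum l
      by_cases hlj : l = j
      · subst hlj
        rw [hτ'j, hα'j, hSl', if_pos le_rfl, if_neg (not_le.mpr hjm)]
        refine ⟨h1, h2.le, h3.le, h4.le, ?_⟩
        have : B l + C l * (S l + (-η + 0)) = B l + C l * S l - C l * η := by ring
        rw [this]
        linarith [henj]
      · by_cases hlm : l = m
        · subst hlm
          rw [hτ'm, hα'other m hlj, hSl', if_pos hjm.le, if_pos le_rfl]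
          obtain ⟨f1, f2, f3, f4, f5⟩ := hfeas m
          have hαmpos : 0 < α m := alpha_pos hW hD hfeas m
          have hc : 0 < k m * α m := mul_pos (hk m) hαmpos
          have hmono := tau_rate_strict_mono hc f1 hηpos
          refine ⟨by linarith, f2, ?_, ?_, ?_⟩
          · calc D m ≤ Wv * τ m * Real.logb 2 (1 + k m * α m / τ m) := f3
              _ = Wv * (τ m * Real.logb 2 (1 + k m * α m / τ m)) := by ring
              _ ≤ Wv * ((τ m + η) * Real.logb 2 (1 + k m * α m / (τ m + η))) := by
                  exact mul_le_mul_of_nonneg_left hmono.le hW.le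
              _ = Wv * (τ m + η) * Real.logb 2 (1 + k m * α m / (τ m + η)) := by ring
          · nlinarith
          · rw [show S m + (-η + η) = S m by ring]
            exact f5
        · rw [hτ'other l hlj hlm, hα'other l hlj, hSl']
          obtain ⟨f1, f2, f3, f4, f5⟩ := hfeas l
          refine ⟨f1, f2, f3, f4, ?_⟩
          by_cases hjl : j ≤ l
          · have hjl' : j < l := lt_of_le_of_ne hjl (fun h => hlj h.symm)
            by_cases hml : m ≤ l
            · rw [if_pos hjl, if_pos hml]
              rw [show S l + (-η + η) = S l by ring]
              exact f5
            · rw [if_pos hjl, if_neg hml, add_zero]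
              have := h5 l ⟨hjl', lt_of_le_of_ne (not_le.mp hml).le hlm⟩
              exact this
          · rw [if_neg hjl, if_neg (fun h : m ≤ l => hjl (hjm.le.trans h))]
            simpa using f5
    -- strict rate and power at m for the new point
    have hrate' : D m < Wv * τ' m * Real.logb 2 (1 + k m * α' m / τ' m) := by
      rw [hτ'm, hα'other m hjmne.symm]
      obtain ⟨f1, f2, f3, f4, f5⟩ := hfeas m
      have hαmpos : 0 < α m := alpha_pos hW hD hfeas m
      have hc : 0 < k m * α m := mul_pos (hk m) hαmpos
      have hmono := tau_rate_strict_mono hc f1 hηpos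
      calc D m ≤ Wv * τ m * Real.logb 2 (1 + k m * α m / τ m) := f3
        _ = Wv * (τ m * Real.logb 2 (1 + k m * α m / τ m)) := by ring
        _ < Wv * ((τ m + η) * Real.logb 2 (1 + k m * α m / (τ m + η))) := by
            exact mul_lt_mul_of_pos_left hmono hW
        _ = Wv * (τ m + η) * Real.logb 2 (1 + k m * α m / (τ m + η)) := by ring
    have hpow' : α' m < τ' m * Pmax := by
      rw [hτ'm, hα'other m hjmne.symm]
      obtain ⟨f1, f2, f3, f4, f5⟩ := hfeas m
      nlinarith
    have hmN : (m : ℕ) ≤ N - 1 := Nat.le_pred_of_lt m.isLt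
    have hjm' : (j : ℕ) < (m : ℕ) := hjm
    have hjN : (j : ℕ) < N - 1 := lt_of_lt_of_le hjm' hmN
    have hlt : N - 1 - (m : ℕ) < N - 1 - (j : ℕ) := Nat.sub_lt_sub_left hjN hjm'
    obtain ⟨τ'', α'', hfeas'', hlt'⟩ :=
      IH (N - 1 - (m : ℕ)) (lt_of_lt_of_le hlt hjn) m le_rfl τ' α' hfeas' hrate' hpow'
    exact ⟨τ'', α'', hfeas'', by rw [hsumtot] at hlt'; exact hlt'⟩
  · -- Branch 1 : direct reduction
    push_neg at hex
    have hP : ∀ l, j < l → C l = 0 ∨ α l < B l + C l * S l := by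
      intro l hjl
      by_cases hCl : C l = 0
      · exact Or.inl hCl
      · exact Or.inr (lt_of_le_of_ne (hfeas l).2.2.2.2 (hex l hjl hCl))
    obtain ⟨η, ⟨h1, h2, h3, h4, h5⟩, hηpos⟩ :=
      (((E1.and (E2.and (E3.and (E4.and (E5 (fun l => j < l) hP))))).filter_mono
        nhdsWithin_le_nhds).and (eventually_mem_nhdsWithin (s := Set.Ioi (0:ℝ)))).exists
    rw [Set.mem_Ioi] at hηpos
    set τ' : Fin N → ℝ := fun x => τ x + (if x = j then -η else 0) with hτ'
    set α' : Fin N → ℝ := fun x => α x + (if x = j then -(C j * η) else 0) with hα'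
    have hτ'j : τ' j = τ j - η := by simp [hτ']; ring
    have hτ'other : ∀ l, l ≠ j → τ' l = τ l := by intro l hl; simp [hτ', hl]
    have hα'j : α' j = α j - C j * η := by simp [hα']; ring
    have hα'other : ∀ l, l ≠ j → α' l = α l := by intro l hl; simp [hα', hl]
    have hsum : ∀ l : Fin N, ∑ x ∈ Finset.Iic l, τ' x
        = S l + (if j ≤ l then -η else 0) := by
      intro l
      simp only [hτ']
      rw [Finset.sum_add_distrib, Finset.sum_ite_eq' (Finset.Iic l) j (fun _ => -η)]
      simp [Finset.mem_Iic, hS]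
    have hfeas' : Feas N Wv Pmax D k B C τ' α' := by
      intro l
      have hSl' := hsum l
      by_cases hlj : l = j
      · subst hlj
        rw [hτ'j, hα'j, hSl', if_pos le_rfl]
        refine ⟨h1, h2.le, h3.le, h4.le, ?_⟩
        have : B l + C l * (S l + -η) = B l + C l * S l - C l * η := by ring
        rw [this]
        linarith [henj]
      · rw [hτ'other l hlj, hα'other l hlj, hSl']
        obtain ⟨f1, f2, f3, f4, f5⟩ := hfeas l
        refine ⟨f1, f2, f3, f4, ?_⟩
        by_cases hjl : j ≤ l
        · rw [if_pos hjl]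
          exact h5 l (lt_of_le_of_ne hjl (fun h => hlj h.symm))
        · rw [if_neg hjl]
          simpa using f5
    refine ⟨τ', α', hfeas', ?_⟩
    simp only [hτ']
    rw [Finset.sum_add_distrib, Finset.sum_ite_eq' Finset.univ j (fun _ => -η)]
    simp [hηpos]

/-- Lemma 3 (either the power constraint or the energy constraint is tight at the
optimum): in the power control and time allocation problem `PCP`, assuming the
feasible set contains a Slater point, any minimizer of the schedule length
satisfies, for each user, the maximum power constraint or the energy causality
constraint with equality. -/
theorem power_or_energy_constraint_tight_at_optimum (N : ℕ) (W Pmax : ℝ)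
    (hW : 0 < W) (hPmax : 0 < Pmax)
    (D k B C : Fin N → ℝ)
    (hD : ∀ i, 0 < D i) (hk : ∀ i, 0 < k i) (hB : ∀ i, 0 ≤ B i) (hC : ∀ i, 0 ≤ C i)
    (F : Set ((Fin N → ℝ) × (Fin N → ℝ)))
    (hF : F = {p | ∀ i : Fin N,
        0 < p.1 i ∧ 0 ≤ p.2 i ∧
        D i ≤ W * p.1 i * Real.logb 2 (1 + k i * p.2 i / p.1 i) ∧
        p.2 i ≤ p.1 i * Pmax ∧
        p.2 i ≤ B i + C i * ∑ j ∈ Finset.Iic i, p.1 j})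
    (hSlater : ∃ p ∈ F, ∀ i : Fin N,
        D i < W * p.1 i * Real.logb 2 (1 + k i * p.2 i / p.1 i) ∧
        p.2 i < p.1 i * Pmax ∧
        p.2 i < B i + C i * ∑ j ∈ Finset.Iic i, p.1 j)
    (τs αs : Fin N → ℝ) (hmem : (τs, αs) ∈ F)
    (hopt : ∀ p ∈ F, ∑ i, τs i ≤ ∑ i, p.1 i) :
    ∀ i : Fin N,
      αs i = τs i * Pmax ∨ αs i = B i + C i * ∑ j ∈ Finset.Iic i, τs j := by
  classical
  subst hF
  simp only [Set.mem_setOf_eq] at hmem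
  have hfeas : Feas N W Pmax D k B C τs αs := hmem
  intro i
  by_contra hcon
  push_neg at hcon
  obtain ⟨hne1, hne2⟩ := hcon
  obtain ⟨hτi, hαi, hri, hpi, hei⟩ := hfeas i
  have hpow : αs i < τs i * Pmax := lt_of_le_of_ne hpi hne1
  have hen : αs i < B i + C i * ∑ x ∈ Finset.Iic i, τs x := lt_of_le_of_ne hei hne2
  set ε : ℝ := min ((τs i * Pmax - αs i) / 2)
      ((B i + C i * ∑ x ∈ Finset.Iic i, τs x - αs i) / 2) with hε
  have hεpos : 0 < ε := lt_min (by linarith) (by linarith)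
  set α1 : Fin N → ℝ := Function.update αs i (αs i + ε) with hα1
  have hα1i : α1 i = αs i + ε := Function.update_self i _ _
  have hα1other : ∀ l, l ≠ i → α1 l = αs l := fun l hl => Function.update_of_ne hl _ _
  have hps : α1 i < τs i * Pmax := by
    rw [hα1i]
    have := min_le_left ((τs i * Pmax - αs i) / 2)
      ((B i + C i * ∑ x ∈ Finset.Iic i, τs x - αs i) / 2)
    linarith
  have hes : α1 i < B i + C i * ∑ x ∈ Finset.Iic i, τs x := by
    rw [hα1i]
    have := min_le_right ((τs i * Pmax - αs i) / 2)
      ((B i + C i * ∑ x ∈ Finset.Iic i, τs x - αs i) / 2)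
    linarith
  have hrs : D i < W * τs i * Real.logb 2 (1 + k i * α1 i / τs i) := by
    rw [hα1i]
    calc D i ≤ W * τs i * Real.logb 2 (1 + k i * αs i / τs i) := hri
      _ < W * τs i * Real.logb 2 (1 + k i * (αs i + ε) / τs i) :=
          alpha_rate_strict_mono hW hτi hαi hεpos (hk i)
  have hfeas1 : Feas N W Pmax D k B C τs α1 := by
    intro l
    by_cases hl : l = i
    · subst hl
      exact ⟨hτi, by rw [hα1i]; linarith, hrs.le, hps.le, hes.le⟩
    · rw [hα1other l hl]
      exact hfeas l
  obtain ⟨τ'', α'', hfeas'', hlt⟩ :=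
    lemA N W Pmax hW hPmax D k B C hD hk (N - 1 - (i : ℕ)) i le_rfl τs α1 hfeas1 hrs hps
  have hmem'' : (τ'', α'') ∈ {p : (Fin N → ℝ) × (Fin N → ℝ) | ∀ i : Fin N,
      0 < p.1 i ∧ 0 ≤ p.2 i ∧
      D i ≤ W * p.1 i * Real.logb 2 (1 + k i * p.2 i / p.1 i) ∧
      p.2 i ≤ p.1 i * Pmax ∧
      p.2 i ≤ B i + C i * ∑ j ∈ Finset.Iic i, p.1 j} := hfeas''
  have := hopt (τ'', α'') hmem''
  simp only at this
  linarith
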